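/- arXiv:2002.02594 — 2 statements merged into one kernel-verified Lean document; each statement's English description precedes it below -/
import Mathlib

section
/- Let ε = (ε_1,…,ε_n) be a random vector in ℝⁿ with E ε_i = 0 for all i, E ε_i ε_j = δ_{ij} (each ε_i square-integrable). Let z, r ∈ ℝⁿ be fixed vectors with ‖z‖ = ‖r‖ = 1 and ⟨z,r⟩ ≠ 1, let ε̂ = ε − ⟨ε, z⟩ z, and define the new residuals ê = U_{z,r} ε̂ = ε̂ − (⟨ε̂, r⟩/(1−⟨z,r⟩))(r − z). Then the covariance matrix of ê is I − r rᵀ, i.e. E ê_i ê_j = δ_{ij} − r_i r_j for all i, j. -/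
open scoped InnerProductSpace
open MeasureTheory

/-- If `ε` is a random vector in ℝⁿ with mean zero and identity covariance
(each coordinate square-integrable), `z, r` are fixed unit vectors with `⟪z,r⟫ ≠ 1`,
`ε̂ = ε − ⟪ε, z⟫ z`, and `ê = U_{z,r} ε̂ = ε̂ − (⟪ε̂, r⟫/(1−⟪z,r⟫)) (r − z)`, then the
covariance matrix of `ê` is `I − r rᵀ`. -/
theorem covariance_of_rotated_residuals {Ω : Type*} [MeasurableSpace Ω]
    (μ : Measure Ω) [IsProbabilityMeasure μ] {n : ℕ}
    (ε : Ω → EuclideanSpace ℝ (Fin n))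
    (hL2 : ∀ i, MemLp (fun ω => ε ω i) 2 μ)
    (hmean : ∀ i, ∫ ω, ε ω i ∂μ = 0)
    (hcov : ∀ i j, ∫ ω, ε ω i * ε ω j ∂μ = if i = j then 1 else 0)
    (z r : EuclideanSpace ℝ (Fin n)) (hz : ‖z‖ = 1) (hr : ‖r‖ = 1)
    (hzr : ⟪z, r⟫_ℝ ≠ 1)
    (εhat : Ω → EuclideanSpace ℝ (Fin n))
    (hεhat : ∀ ω, εhat ω = ε ω - ⟪ε ω, z⟫_ℝ • z)
    (ehat : Ω → EuclideanSpace ℝ (Fin n))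
    (hehat : ∀ ω, ehat ω = εhat ω - (⟪εhat ω, r⟫_ℝ / (1 - ⟪z, r⟫_ℝ)) • (r - z)) :
    ∀ i j, ∫ ω, ehat ω i * ehat ω j ∂μ = (if i = j then 1 else 0) - r i * r j := by
  intro i j
  set s : ℝ := ⟪z, r⟫_ℝ with hs_def
  have hs : (1 : ℝ) - s ≠ 0 := sub_ne_zero.mpr (Ne.symm hzr)
  set a : Fin n → ℝ := fun k => -z k + s / (1 - s) * (r k - z k) with ha_def
  set b : Fin n → ℝ := fun k => -(r k - z k) / (1 - s) with hb_def
  set A : Fin n → Fin n → ℝ :=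
    fun k l => (if k = l then 1 else 0) + a k * z l + b k * r l with hA_def
  have hinner : ∀ (x y : EuclideanSpace ℝ (Fin n)), ⟪x, y⟫_ℝ = ∑ k, x k * y k := by
    intro x y
    simp [PiLp.inner_apply, RCLike.inner_apply]
    exact Finset.sum_congr rfl fun _ _ => mul_comm _ _
  have hZZ : ∑ k, z k * z k = 1 := by
    rw [← hinner z z, real_inner_self_eq_norm_sq, hz]; norm_num
  have hRR : ∑ k, r k * r k = 1 := by
    rw [← hinner r r, real_inner_self_eq_norm_sq, hr]; norm_num
  have hZR : ∑ k, z k * r k = s := by rw [← hinner z r]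
  -- coordinates of ehat
  have hcoord : ∀ ω k, ehat ω k = ∑ l, A k l * ε ω l := by
    intro ω k
    have h1 : ⟪ε ω, z⟫_ℝ = ∑ l, z l * ε ω l := by
      rw [hinner]; exact Finset.sum_congr rfl fun l _ => mul_comm _ _
    have h3 : ⟪ε ω, r⟫_ℝ = ∑ l, r l * ε ω l := by
      rw [hinner]; exact Finset.sum_congr rfl fun l _ => mul_comm _ _
    have hRHS : ∑ l, A k l * ε ω l
        = ε ω k + a k * (∑ l, z l * ε ω l) + b k * (∑ l, r l * ε ω l) := by
      simp only [hA_def, add_mul, ite_mul, one_mul, zero_mul, Finset.sum_add_distrib,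
        Finset.sum_ite_eq, Finset.mem_univ, if_true, mul_assoc, ← Finset.mul_sum]
    rw [hRHS, ← h1, ← h3, hehat ω, hεhat ω]
    simp only [inner_sub_left, real_inner_smul_left, PiLp.sub_apply, PiLp.smul_apply,
      smul_eq_mul, ← hs_def, ha_def, hb_def]
    field_simp
    ring
  -- integrability of products
  have hInt : ∀ k l, Integrable (fun ω => ε ω k * ε ω l) μ := by
    intro k l
    have h1 : Integrable (fun ω => (ε ω k + ε ω l) ^ 2) μ := ((hL2 k).add (hL2 l)).integrable_sq
    have h2 : Integrable (fun ω => ε ω k ^ 2) μ := (hL2 k).integrable_sq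
    have h3 : Integrable (fun ω => ε ω l ^ 2) μ := (hL2 l).integrable_sq
    have heq : (fun ω => ε ω k * ε ω l)
        = fun ω => ((ε ω k + ε ω l) ^ 2 - ε ω k ^ 2 - ε ω l ^ 2) / 2 := by
      funext ω; ring
    rw [heq]
    exact ((h1.sub h2).sub h3).div_const 2
  have hint2 : ∀ ω, ehat ω i * ehat ω j = ∑ k, ∑ l, (A i k * A j l) * (ε ω k * ε ω l) := by
    intro ω
    rw [hcoord ω i, hcoord ω j, Finset.sum_mul_sum]
    exact Finset.sum_congr rfl fun k _ => Finset.sum_congr rfl fun l _ => by ring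
  have hIntegral : ∫ ω, ehat ω i * ehat ω j ∂μ = ∑ k, A i k * A j k := by
    calc ∫ ω, ehat ω i * ehat ω j ∂μ
        = ∫ ω, ∑ k, ∑ l, (A i k * A j l) * (ε ω k * ε ω l) ∂μ := by
          exact integral_congr_ae (Filter.Eventually.of_forall hint2)
      _ = ∑ k, ∑ l, (A i k * A j l) * ∫ ω, ε ω k * ε ω l ∂μ := by
          rw [integral_finset_sum _
            (fun k _ => integrable_finset_sum _ fun l _ => (hInt k l).const_mul _)]
          refine Finset.sum_congr rfl fun k _ => ?_
          rw [integral_finset_sum _ (fun l _ => (hInt k l).const_mul _)]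
          exact Finset.sum_congr rfl fun l _ => integral_const_mul _ _
      _ = ∑ k, A i k * A j k := by
          simp only [hcov]
          refine Finset.sum_congr rfl fun k _ => ?_
          simp [mul_ite, Finset.sum_ite_eq, eq_comm]
  rw [hIntegral]
  have expand : ∀ k, A i k * A j k =
      (if i = k then (1:ℝ) else 0) * (if j = k then 1 else 0)
      + (a j * ((if i = k then (1:ℝ) else 0) * z k) + b j * ((if i = k then (1:ℝ) else 0) * r k))
      + (a i * ((if j = k then (1:ℝ) else 0) * z k) + b i * ((if j = k then (1:ℝ) else 0) * r k))
      + (a i * a j) * (z k * z k) + (a i * b j + b i * a j) * (z k * r k)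
      + (b i * b j) * (r k * r k) := by
    intro k; simp only [hA_def]; ring
  rw [Finset.sum_congr rfl fun k _ => expand k]
  simp only [Finset.sum_add_distrib, ← Finset.mul_sum, hZZ, hZR, hRR,
    boole_mul, Finset.sum_ite_eq, Finset.mem_univ, if_true, mul_one]
  have hij : (if i = j then (1:ℝ) else 0) = if j = i then 1 else 0 := by
    simp [eq_comm]
  have hscal : a j * z i + b j * r i + (a i * z j + b i * r j) + a i * a j
      + (a i * b j + b i * a j) * s + b i * b j = -(r i * r j) := by
    simp only [ha_def, hb_def]
    field_simp
    ring
  rw [hij]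
  linarith [hscal]
end

section
/- (Proposition 1(i).) Let ε = (ε_1,…,ε_n) be a random vector in ℝⁿ with E ε_i = 0 and E ε_i ε_j = δ_{ij} (each ε_i square-integrable). Let r, z̃, r̃ ∈ ℝⁿ be fixed vectors with ‖r‖ = ‖z̃‖ = ‖r̃‖ = 1, ⟨r, z̃⟩ = 0, ⟨r, r̃⟩ = 0, and ⟨z̃, r̃⟩ ≠ 1. Let ε̂ = ε − ⟨ε, r⟩ r − ⟨ε, z̃⟩ z̃ and define the new residuals ê = U_{z̃,r̃} ε̂ = ε̂ − (⟨ε̂, r̃⟩/(1−⟨z̃,r̃⟩))(r̃ − z̃). Then the covariance matrix of ê is I − r rᵀ − r̃ r̃ᵀ, i.e. E ê_i ê_j = δ_{ij} − r_i r_j − r̃_i r̃_j for all i, j. -/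
open scoped InnerProductSpace
open MeasureTheory

lemma aux_int_mul {Ω : Type*} [MeasurableSpace Ω] {μ : Measure Ω} {f g : Ω → ℝ}
    (hf : MemLp f 2 μ) (hg : MemLp g 2 μ) : Integrable (fun ω => f ω * g ω) μ := by
  have h := MeasureTheory.L2.integrable_inner (𝕜 := ℝ) (hf.toLp f) (hg.toLp g)
  apply h.congr
  filter_upwards [hf.coeFn_toLp, hg.coeFn_toLp] with ω h1 h2
  simp [h1, h2, real_inner_comm, mul_comm]

/-- Proposition 1(i): Let `ε` be a random vector in ℝⁿ with mean zero
and identity covariance (each coordinate square-integrable), and let `r, z̃, r̃` be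
fixed unit vectors with `r ⟂ z̃`, `r ⟂ r̃`, `⟪z̃,r̃⟫ ≠ 1`. If
`ε̂ = ε − ⟪ε,r⟫ r − ⟪ε,z̃⟫ z̃` and `ê = U_{z̃,r̃} ε̂ = ε̂ − (⟪ε̂,r̃⟫/(1−⟪z̃,r̃⟫))(r̃−z̃)`,
then the covariance matrix of `ê` is `I − r rᵀ − r̃ r̃ᵀ`. -/
theorem covariance_new_residuals_linear_regression {Ω : Type*} [MeasurableSpace Ω]
    (μ : Measure Ω) [IsProbabilityMeasure μ] {n : ℕ}
    (ε : Ω → EuclideanSpace ℝ (Fin n))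
    (hL2 : ∀ i, MemLp (fun ω => ε ω i) 2 μ)
    (hmean : ∀ i, ∫ ω, ε ω i ∂μ = 0)
    (hcov : ∀ i j, ∫ ω, ε ω i * ε ω j ∂μ = if i = j then 1 else 0)
    (r zt rt : EuclideanSpace ℝ (Fin n))
    (hr : ‖r‖ = 1) (hzt : ‖zt‖ = 1) (hrt : ‖rt‖ = 1)
    (hrzt : ⟪r, zt⟫_ℝ = 0) (hrrt : ⟪r, rt⟫_ℝ = 0) (hztrt : ⟪zt, rt⟫_ℝ ≠ 1)
    (εhat : Ω → EuclideanSpace ℝ (Fin n))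
    (hεhat : ∀ ω, εhat ω = ε ω - ⟪ε ω, r⟫_ℝ • r - ⟪ε ω, zt⟫_ℝ • zt)
    (ehat : Ω → EuclideanSpace ℝ (Fin n))
    (hehat : ∀ ω, ehat ω = εhat ω - (⟪εhat ω, rt⟫_ℝ / (1 - ⟪zt, rt⟫_ℝ)) • (rt - zt)) :
    ∀ i j, ∫ ω, ehat ω i * ehat ω j ∂μ
      = (if i = j then 1 else 0) - r i * r j - rt i * rt j := by
  intro i j
  set t : ℝ := ⟪zt, rt⟫_ℝ with htdef
  have ht : (1 : ℝ) - t ≠ 0 := sub_ne_zero.mpr (Ne.symm hztrt)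
  set c : ℝ := 1 / (1 - t) with hcdef
  have hc' : ∀ x : ℝ, x / (1 - t) = c * x := by
    intro x; rw [hcdef]; field_simp
  have hrr : ⟪r, r⟫_ℝ = 1 := by
    rw [real_inner_self_eq_norm_sq, hr]; norm_num
  have hzz : ⟪zt, zt⟫_ℝ = 1 := by
    rw [real_inner_self_eq_norm_sq, hzt]; norm_num
  have hrtrt : ⟪rt, rt⟫_ℝ = 1 := by
    rw [real_inner_self_eq_norm_sq, hrt]; norm_num
  have hztr : ⟪zt, r⟫_ℝ = 0 := by rw [real_inner_comm]; exact hrzt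
  have hrtr : ⟪rt, r⟫_ℝ = 0 := by rw [real_inner_comm]; exact hrrt
  have hrtzt : ⟪rt, zt⟫_ℝ = t := by rw [real_inner_comm]
  set w : Fin n → EuclideanSpace ℝ (Fin n) := fun i =>
    EuclideanSpace.single i (1 : ℝ) - r i • r - zt i • zt
      - (c * (rt i - zt i)) • (rt - t • zt) with hwdef
  have hinner : ∀ ω, ⟪εhat ω, rt⟫_ℝ = ⟪ε ω, rt⟫_ℝ - t * ⟪ε ω, zt⟫_ℝ := by
    intro ω
    rw [hεhat, inner_sub_left, inner_sub_left, real_inner_smul_left,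
      real_inner_smul_left, hrrt, ← htdef]
    ring
  have hcoord : ∀ ω (i : Fin n), ehat ω i = ⟪w i, ε ω⟫_ℝ := by
    intro ω i
    have h1 : ehat ω i = ε ω i - ⟪ε ω, r⟫_ℝ * r i - ⟪ε ω, zt⟫_ℝ * zt i
        - (c * (⟪ε ω, rt⟫_ℝ - t * ⟪ε ω, zt⟫_ℝ)) * (rt i - zt i) := by
      rw [hehat, hinner, hc']
      rw [hεhat]
      simp only [PiLp.sub_apply, PiLp.smul_apply, smul_eq_mul]
    have h2 : ⟪w i, ε ω⟫_ℝ = ε ω i - r i * ⟪r, ε ω⟫_ℝ - zt i * ⟪zt, ε ω⟫_ℝ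
        - (c * (rt i - zt i)) * (⟪rt, ε ω⟫_ℝ - t * ⟪zt, ε ω⟫_ℝ) := by
      rw [hwdef]
      simp only [inner_sub_left, real_inner_smul_left, inner_sub_right,
        real_inner_smul_right, EuclideanSpace.inner_single_left, conj_trivial, one_mul]
    rw [h1, h2, real_inner_comm r (ε ω), real_inner_comm zt (ε ω), real_inner_comm rt (ε ω)]
    ring
  have hsum : ∀ ω (i : Fin n), ehat ω i = ∑ k, w i k * ε ω k := by
    intro ω i
    rw [hcoord ω i, PiLp.inner_apply]
    exact Finset.sum_congr rfl fun k _ => by rw [RCLike.inner_apply, conj_trivial, mul_comm]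
  have key : ∫ ω, ehat ω i * ehat ω j ∂μ = ∑ k, w i k * w j k := by
    have hprod : ∀ ω, ehat ω i * ehat ω j
        = ∑ k, ∑ l, (w i k * w j l) * (ε ω k * ε ω l) := by
      intro ω
      rw [hsum ω i, hsum ω j, Finset.sum_mul_sum]
      exact Finset.sum_congr rfl fun k _ => Finset.sum_congr rfl fun l _ => by ring
    calc ∫ ω, ehat ω i * ehat ω j ∂μ
        = ∫ ω, ∑ k, ∑ l, (w i k * w j l) * (ε ω k * ε ω l) ∂μ :=
          integral_congr_ae (Filter.Eventually.of_forall hprod)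
      _ = ∑ k, ∑ l, (w i k * w j l) * ∫ ω, ε ω k * ε ω l ∂μ := by
          rw [integral_finset_sum]
          · refine Finset.sum_congr rfl fun k _ => ?_
            rw [integral_finset_sum]
            · exact Finset.sum_congr rfl fun l _ => integral_const_mul _ _
            · exact fun l _ => (aux_int_mul (hL2 k) (hL2 l)).const_mul _
          · exact fun k _ => integrable_finset_sum _
              fun l _ => (aux_int_mul (hL2 k) (hL2 l)).const_mul _
      _ = ∑ k, w i k * w j k := by
          simp only [hcov]
          simp [Finset.sum_ite_eq, mul_ite]
  rw [key]
  have hwin : ∑ k, w i k * w j k = ⟪w i, w j⟫_ℝ := by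
    rw [PiLp.inner_apply]
    exact Finset.sum_congr rfl fun k _ => by rw [RCLike.inner_apply, conj_trivial, mul_comm]
  rw [hwin, hwdef]
  simp only [inner_sub_left, inner_sub_right, real_inner_smul_left, real_inner_smul_right,
    EuclideanSpace.inner_single_left, EuclideanSpace.inner_single_right, conj_trivial,
    one_mul, mul_one, EuclideanSpace.single_apply, hrr, hzz, hrtrt, hrzt, hrrt, hztr,
    hrtr, hrtzt, ← htdef, PiLp.sub_apply, PiLp.smul_apply, smul_eq_mul]
  have hij : (if j = i then (1:ℝ) else 0) = if i = j then 1 else 0 := by simp [eq_comm]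
  rw [hij, hcdef]
  field_simp
  ring
end
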